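/- Let X̄ be the space of ρ-paths from a basepoint in a length space X with metric d(c₁,c₂)=L(c₁)+L(c₂)−2L(c₁∧c₂), and let * denote the constant path. The Gromov product (c₁,c₂)_* := ½[d(*,c₁)+d(*,c₂)−d(c₁,c₂)] equals L(c₁∧c₂), and it satisfies the 0-hyperbolicity inequality (c₁,c₂)_* ≥ min{(c₁,c₃)_*, (c₃,c₂)_*} for all c₁,c₂,c₃ ∈ X̄. -/
import Mathlib


open Set

/-- An arclength-parameterized weakly normal rectifiable path (ρ-path) in a metric
space `X`.  The path is defined on `[0, len]`, extended constantly outside. -/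
structure RPath (X : Type*) [MetricSpace X] where
  /-- the length of the path -/
  len : ℝ
  len_nonneg : 0 ≤ len
  toFun : ℝ → X
  contOn : ContinuousOn toFun (Icc 0 len)
  /-- arclength parameterization: the length of the restriction to `[s,t]` is `t - s`. -/
  arclength : ∀ s t : ℝ, 0 ≤ s → s ≤ t → t ≤ len →
    eVariationOn toFun (Icc s t) = ENNReal.ofReal (t - s)
  clamp_left : ∀ t : ℝ, t ≤ 0 → toFun t = toFun 0
  clamp_right : ∀ t : ℝ, len ≤ t → toFun t = toFun len
  /-- weak normality: no nontrivial subsegment `[u,v]` with equal endpoints is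
  null-homotopic in its own image rel endpoints. -/
  weaklyNormal : ¬ ∃ u v : ℝ, 0 ≤ u ∧ u < v ∧ v ≤ len ∧ toFun u = toFun v ∧
    ∃ H : ℝ × ℝ → X, ContinuousOn H (Icc u v ×ˢ Icc 0 1) ∧
      (∀ t ∈ Icc u v, H (t, 0) = toFun t) ∧
      (∀ t ∈ Icc u v, H (t, 1) = toFun u) ∧
      (∀ s ∈ Icc (0:ℝ) 1, H (u, s) = toFun u ∧ H (v, s) = toFun v) ∧
      (∀ p ∈ Icc u v ×ˢ Icc (0:ℝ) 1, H p ∈ toFun '' Icc u v)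

namespace RPath

variable {X : Type*} [MetricSpace X]

/-- `c` starts at the point `p`. -/
def StartsAt (c : RPath X) (p : X) : Prop := c.toFun 0 = p

/-- `c` ends at the point `p`. -/
def EndsAt (c : RPath X) (p : X) : Prop := c.toFun c.len = p

/-- The length `L(c₁ ∧ c₂)` of the longest common initial segment of two paths. -/
noncomputable def wedgeLen (c₁ c₂ : RPath X) : ℝ :=
  sSup {b : ℝ | 0 ≤ b ∧ b ≤ c₁.len ∧ b ≤ c₂.len ∧ ∀ t ∈ Icc 0 b, c₁.toFun t = c₂.toFun t}

/-- The distance `d(c₁,c₂) = L(c₁) + L(c₂) - 2 L(c₁ ∧ c₂)`. -/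
noncomputable def rhoDist (c₁ c₂ : RPath X) : ℝ :=
  c₁.len + c₂.len - 2 * wedgeLen c₁ c₂

end RPath

/-- A length space: a metric space with at least two points in which any two points
are joined by paths of length arbitrarily close to the distance between them. -/
def IsLengthSpace (X : Type*) [MetricSpace X] : Prop :=
  (∃ x y : X, x ≠ y) ∧
  ∀ x y : X, ∀ ε : ℝ, 0 < ε → ∃ (c : ℝ → X) (b : ℝ), 0 ≤ b ∧
    ContinuousOn c (Icc 0 b) ∧ c 0 = x ∧ c b = y ∧
    eVariationOn c (Icc 0 b) < ENNReal.ofReal (dist x y + ε)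

/-- The constant path at `p` (a ρ-path of length `0`). -/
noncomputable def RPath.const {X : Type*} [MetricSpace X] (p : X) : RPath X where
  len := 0
  len_nonneg := le_rfl
  toFun := fun _ => p
  contOn := continuousOn_const
  arclength := by
    intro s t hs hst ht
    have hs0 : s = 0 := le_antisymm (hst.trans ht) hs
    have ht0 : t = 0 := le_antisymm ht (hs0 ▸ hst)
    subst hs0; subst ht0
    rw [eVariationOn.subsingleton _ (by simp [Set.Icc_self])]
    simp
  clamp_left := fun _ _ => rfl
  clamp_right := fun _ _ => rfl
  weaklyNormal := by
    rintro ⟨u, v, hu, huv, hv, -⟩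
    linarith

/-- The Gromov product `(c₁,c₂)_* = ½[d(*,c₁) + d(*,c₂) - d(c₁,c₂)]` with respect to
the constant path `*`. -/
noncomputable def gromovProd {X : Type*} [MetricSpace X] (base : X) (c₁ c₂ : RPath X) : ℝ :=
  (RPath.rhoDist (RPath.const base) c₁ + RPath.rhoDist (RPath.const base) c₂
    - RPath.rhoDist c₁ c₂) / 2

section Aux

variable {X : Type*} [MetricSpace X]

/-- The defining set of `wedgeLen`. -/
def wedgeSet (c₁ c₂ : RPath X) : Set ℝ :=
  {b : ℝ | 0 ≤ b ∧ b ≤ c₁.len ∧ b ≤ c₂.len ∧ ∀ t ∈ Icc 0 b, c₁.toFun t = c₂.toFun t}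

lemma wedgeLen_def (c₁ c₂ : RPath X) : RPath.wedgeLen c₁ c₂ = sSup (wedgeSet c₁ c₂) := rfl

lemma zero_mem_wedgeSet {c₁ c₂ : RPath X} {base : X} (h₁ : c₁.StartsAt base)
    (h₂ : c₂.StartsAt base) : (0:ℝ) ∈ wedgeSet c₁ c₂ := by
  refine ⟨le_rfl, c₁.len_nonneg, c₂.len_nonneg, ?_⟩
  intro t ht
  have : t = 0 := le_antisymm ht.2 ht.1
  rw [this, h₁, h₂]

lemma bddAbove_wedgeSet (c₁ c₂ : RPath X) : BddAbove (wedgeSet c₁ c₂) :=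
  ⟨c₁.len, fun _ hb => hb.2.1⟩

lemma wedgeLen_le_left {c₁ c₂ : RPath X} {base : X} (h₁ : c₁.StartsAt base)
    (h₂ : c₂.StartsAt base) : RPath.wedgeLen c₁ c₂ ≤ c₁.len :=
  csSup_le ⟨0, zero_mem_wedgeSet h₁ h₂⟩ fun _ hb => hb.2.1

lemma wedgeLen_le_right {c₁ c₂ : RPath X} {base : X} (h₁ : c₁.StartsAt base)
    (h₂ : c₂.StartsAt base) : RPath.wedgeLen c₁ c₂ ≤ c₂.len :=
  csSup_le ⟨0, zero_mem_wedgeSet h₁ h₂⟩ fun _ hb => hb.2.2.1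

lemma eq_of_lt_wedgeLen {c₁ c₂ : RPath X} {base : X} (h₁ : c₁.StartsAt base)
    (h₂ : c₂.StartsAt base) {t : ℝ} (ht0 : 0 ≤ t) (ht : t < RPath.wedgeLen c₁ c₂) :
    c₁.toFun t = c₂.toFun t := by
  obtain ⟨b, hb, htb⟩ := exists_lt_of_lt_csSup ⟨0, zero_mem_wedgeSet h₁ h₂⟩ ht
  exact hb.2.2.2 t ⟨ht0, htb.le⟩

lemma wedgeLen_const {c : RPath X} {base : X} (h : c.StartsAt base) :
    RPath.wedgeLen (RPath.const base) c = 0 := by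
  rw [wedgeLen_def]
  have : wedgeSet (RPath.const base) c = {0} := by
    ext b
    constructor
    · rintro ⟨hb0, hb1, -, -⟩
      exact le_antisymm hb1 hb0
    · rintro rfl
      exact zero_mem_wedgeSet (by rfl) h
  rw [this, csSup_singleton]

lemma rhoDist_const {c : RPath X} {base : X} (h : c.StartsAt base) :
    RPath.rhoDist (RPath.const base) c = c.len := by
  rw [RPath.rhoDist, wedgeLen_const h]
  show (0:ℝ) + c.len - 2 * 0 = c.len
  ring

lemma gromovProd_eq {c₁ c₂ : RPath X} {base : X} (h₁ : c₁.StartsAt base)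
    (h₂ : c₂.StartsAt base) : gromovProd base c₁ c₂ = RPath.wedgeLen c₁ c₂ := by
  rw [gromovProd, rhoDist_const h₁, rhoDist_const h₂, RPath.rhoDist]
  ring

end Aux

/-- In the space of ρ-paths from the basepoint, the Gromov product
with respect to the constant path `*` equals `L(c₁ ∧ c₂)`, and it satisfies the
0-hyperbolicity inequality. -/
theorem gromovProd_eq_wedgeLen_and_zero_hyperbolic {X : Type*} [MetricSpace X]
    (hX : IsLengthSpace X) (base : X) :
    (∀ c₁ c₂ : RPath X, c₁.StartsAt base → c₂.StartsAt base →
      gromovProd base c₁ c₂ = RPath.wedgeLen c₁ c₂) ∧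
    (∀ c₁ c₂ c₃ : RPath X, c₁.StartsAt base → c₂.StartsAt base → c₃.StartsAt base →
      min (gromovProd base c₁ c₃) (gromovProd base c₃ c₂) ≤ gromovProd base c₁ c₂) := by
  constructor
  · intro c₁ c₂ h₁ h₂
    exact gromovProd_eq h₁ h₂
  · intro c₁ c₂ c₃ h₁ h₂ h₃
    rw [gromovProd_eq h₁ h₃, gromovProd_eq h₃ h₂, gromovProd_eq h₁ h₂]
    set m := min (RPath.wedgeLen c₁ c₃) (RPath.wedgeLen c₃ c₂) with hm
    rcases le_or_gt m 0 with hm0 | hm0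
    · exact hm0.trans (le_csSup (bddAbove_wedgeSet c₁ c₂) (zero_mem_wedgeSet h₁ h₂))
    · -- show every b < m belongs to the wedge set of c₁, c₂
      have key : ∀ b : ℝ, 0 ≤ b → b < m → b ∈ wedgeSet c₁ c₂ := by
        intro b hb0 hbm
        have hb13 : b < RPath.wedgeLen c₁ c₃ := lt_of_lt_of_le hbm (min_le_left _ _)
        have hb32 : b < RPath.wedgeLen c₃ c₂ := lt_of_lt_of_le hbm (min_le_right _ _)
        refine ⟨hb0, hb13.le.trans (wedgeLen_le_left h₁ h₃),
          hb32.le.trans (wedgeLen_le_right h₃ h₂), ?_⟩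
        intro t ht
        have ht13 : t < RPath.wedgeLen c₁ c₃ := lt_of_le_of_lt ht.2 hb13
        have ht32 : t < RPath.wedgeLen c₃ c₂ := lt_of_le_of_lt ht.2 hb32
        rw [eq_of_lt_wedgeLen h₁ h₃ ht.1 ht13, eq_of_lt_wedgeLen h₃ h₂ ht.1 ht32]
      rw [RPath.wedgeLen]
      refine le_of_forall_lt fun x hx => ?_
      rcases lt_or_ge x 0 with hx0 | hx0
      · exact lt_of_lt_of_le hx0
          (le_csSup (bddAbove_wedgeSet c₁ c₂) (zero_mem_wedgeSet h₁ h₂))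
      · have hmid : max x 0 < m := by simp [hx, hm0]
        calc x < (x + m) / 2 := by linarith
          _ ≤ sSup (wedgeSet c₁ c₂) := le_csSup (bddAbove_wedgeSet c₁ c₂)
              (key _ (by linarith) (by linarith))
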